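/- With ΛQ = (1/3)Q + (1/2)·x·Q', one has L(ΛQ) = -Q on ℝ. -/

import Mathlib

noncomputable def Q : ℝ → ℝ := fun x => (5/2 : ℝ) ^ ((1:ℝ)/3) * (Real.cosh (3*x/2)) ^ (-(2:ℝ)/3)

noncomputable def L (f : ℝ → ℝ) : ℝ → ℝ := fun x => -(deriv (deriv f)) x + f x - 4 * (Q x)^3 * f x

noncomputable def ΛQ : ℝ → ℝ := fun x => (1/3) * Q x + (1/2) * x * deriv Q x

noncomputable def c : ℝ := (5/2 : ℝ) ^ ((1:ℝ)/3)

noncomputable def T : ℝ → ℝ := fun x => Real.cosh (3*x/2) ^ (-(1:ℝ)/3)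

noncomputable def S : ℝ → ℝ := fun x => Real.sinh (3*x/2)

noncomputable def g1 : ℝ → ℝ := fun x => -c * (T x ^ 5 * S x)

noncomputable def g2 : ℝ → ℝ := fun x => 5/2*c * (T x ^ 8 * S x ^ 2) - 3/2*c * T x ^ 2

noncomputable def g3 : ℝ → ℝ := fun x => -10*c*(T x ^ 11 * S x ^ 3) + 9*c*(T x ^ 5 * S x)

lemma rpow_third {u : ℝ} (hu : 0 < u) (n : ℕ) :
    u ^ (-(n:ℝ)/3) = (u ^ (-(1:ℝ)/3)) ^ n := by
  rw [← Real.rpow_natCast (u ^ (-(1:ℝ)/3)) n, ← Real.rpow_mul hu.le]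
  congr 1
  ring

lemma hc3 : c ^ 3 = 5/2 := by
  rw [c, ← Real.rpow_natCast ((5/2:ℝ) ^ ((1:ℝ)/3)) 3, ← Real.rpow_mul (by norm_num)]
  norm_num

lemma QT : Q = fun x => c * T x ^ 2 := by
  funext x
  show (5/2 : ℝ) ^ ((1:ℝ)/3) * Real.cosh (3*x/2) ^ (-(2:ℝ)/3) = c * T x ^ 2
  rw [show (-(2:ℝ)/3) = -((2:ℕ):ℝ)/3 by norm_num, rpow_third (Real.cosh_pos _)]
  rfl

lemma hTc (x : ℝ) : T x ^ 3 * Real.cosh (3*x/2) = 1 := by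
  have h : T x ^ 3 = Real.cosh (3*x/2) ^ (-(1:ℝ)) := by
    rw [T]
    rw [← Real.rpow_natCast (Real.cosh (3*x/2) ^ (-(1:ℝ)/3)) 3,
      ← Real.rpow_mul (Real.cosh_pos _).le]
    norm_num
  rw [h, Real.rpow_neg_one]
  exact inv_mul_cancel₀ (Real.cosh_pos _).ne'

lemma key2 (x : ℝ) : T x ^ 6 * Real.cosh (3*x/2) ^ 2 = 1 := by
  have h := hTc x
  nlinarith [h]

lemma hlin (x : ℝ) : HasDerivAt (fun x : ℝ => 3*x/2) (3/2) x := by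
  simpa using ((hasDerivAt_id x).const_mul (3:ℝ)).div_const 2

lemma hS' (x : ℝ) : HasDerivAt S ((3/2) * Real.cosh (3*x/2)) x := by
  have h := (Real.hasDerivAt_sinh (3*x/2)).comp x (hlin x)
  rw [mul_comm] at h
  exact h

lemma hcosh' (x : ℝ) : HasDerivAt (fun x : ℝ => Real.cosh (3*x/2)) ((3/2) * S x) x := by
  have h := (Real.hasDerivAt_cosh (3*x/2)).comp x (hlin x)
  rw [mul_comm] at h
  exact h

lemma hT' (x : ℝ) : HasDerivAt T (-(1/2) * (T x ^ 4 * S x)) x := by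
  have h := (hcosh' x).rpow_const (p := -(1:ℝ)/3) (Or.inl (Real.cosh_pos _).ne')
  have h4 : Real.cosh (3*x/2) ^ (-(1:ℝ)/3 - 1) = T x ^ 4 := by
    rw [show (-(1:ℝ)/3 - 1) = -((4:ℕ):ℝ)/3 by norm_num, rpow_third (Real.cosh_pos _)]; rfl
  rw [h4] at h
  convert h using 1
  · rfl
  ring

lemma hQ' (x : ℝ) : HasDerivAt Q (g1 x) x := by
  rw [QT]
  have h := ((hT' x).pow 2).const_mul c
  refine h.congr_deriv (Eq.symm ?_)
  simp only [g1]
  push_cast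
  ring

lemma hg1' (x : ℝ) : HasDerivAt g1 (g2 x) x := by
  have h := (((hT' x).pow 5).mul (hS' x)).const_mul (-c)
  refine h.congr_deriv (Eq.symm ?_)
  simp only [g2, Pi.pow_apply]
  push_cast
  linear_combination ((3/2)*c*T x^2) * hTc x

lemma hg2' (x : ℝ) : HasDerivAt g2 (g3 x) x := by
  have h := ((((hT' x).pow 8).mul ((hS' x).pow 2)).const_mul (5/2*c)).sub
    (((hT' x).pow 2).const_mul (3/2*c))
  refine h.congr_deriv (Eq.symm ?_)
  simp only [g3, Pi.pow_apply]
  push_cast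
  linear_combination (-(15/2)*c*T x^5*S x) * hTc x

lemma g2eq (x : ℝ) : g2 x = Q x - Q x ^ 4 := by
  rw [QT]
  simp only [g2]
  have h1 : S x ^ 2 = Real.cosh (3*x/2) ^ 2 - 1 := by
    simp only [S]; exact Real.sinh_sq (3*x/2)
  have h2 := key2 x
  have h3 := hc3
  linear_combination ((5/2)*c*T x^8) * h1 + ((5/2)*c*T x^2) * h2 + (c*T x^8) * h3

lemma g3eq (x : ℝ) : g3 x = g1 x - 4 * (Q x)^3 * g1 x := by
  rw [QT]
  simp only [g3, g1]
  have h1 : S x ^ 2 = Real.cosh (3*x/2) ^ 2 - 1 := by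
    simp only [S]; exact Real.sinh_sq (3*x/2)
  have h2 := key2 x
  have h3 := hc3
  linear_combination (-10*c*T x^11*S x) * h1 + (-10*c*T x^5*S x) * h2 + (-4*c*T x^11*S x) * h3

theorem L_LambdaQ : ∀ x : ℝ, L ΛQ x = -Q x := by
  have hdQ : deriv Q = g1 := funext fun x => (hQ' x).deriv
  have hΛ : ΛQ = fun x => 1/3 * Q x + 1/2 * (x * g1 x) := by
    funext x; simp only [ΛQ, hdQ]; ring
  have hΛ1 : ∀ x, HasDerivAt ΛQ (5/6 * g1 x + 1/2 * (x * g2 x)) x := by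
    intro x
    rw [hΛ]
    have h := ((hQ' x).const_mul (1/3:ℝ)).add
      (((hasDerivAt_id x).mul (hg1' x)).const_mul (1/2:ℝ))
    refine h.congr_deriv (Eq.symm ?_)
    simp only [id]
    ring
  have hdΛ : deriv ΛQ = fun x => 5/6 * g1 x + 1/2 * (x * g2 x) :=
    funext fun x => (hΛ1 x).deriv
  have hΛ2 : ∀ x, HasDerivAt (deriv ΛQ) (4/3 * g2 x + 1/2 * (x * g3 x)) x := by
    intro x
    rw [hdΛ]
    have h := ((hg1' x).const_mul (5/6:ℝ)).add
      (((hasDerivAt_id x).mul (hg2' x)).const_mul (1/2:ℝ))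
    refine h.congr_deriv (Eq.symm ?_)
    simp only [id]
    ring
  intro x
  have hdd : deriv (deriv ΛQ) x = 4/3 * g2 x + 1/2 * (x * g3 x) := (hΛ2 x).deriv
  simp only [L]
  rw [hdd, g2eq, g3eq]
  simp only [hΛ]
  ring
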